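/- The function F satisfies F(1) > γ/(γ + θ_max) > 0, where θ_max = max_{x∈[0,A]} θ(x). -/

import Mathlib

open MeasureTheory Real Set Filter

/-- `Λ(x,s) = ∫_s^x θ(t) dt`. -/
noncomputable def Lam (θ : ℝ → ℝ) (x s : ℝ) : ℝ := ∫ t in s..x, θ t

/-- `w(x;Q) = Q e^{-γx} ∫₀^x e^{γs} θ(s) e^{-Q Λ(x,s)} ds`. -/
noncomputable def w (γ : ℝ) (θ : ℝ → ℝ) (Q x : ℝ) : ℝ :=
  Q * Real.exp (-γ * x) * ∫ s in (0:ℝ)..x, Real.exp (γ * s) * θ s * Real.exp (-Q * Lam θ x s)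
/-- The kernel `k(x,s) = (p(x)/N)·θ(s)·e^{-γ(x-s)}`. -/
noncomputable def kker (γ N : ℝ) (p θ : ℝ → ℝ) (x s : ℝ) : ℝ :=
  (p x / N) * θ s * Real.exp (-γ * (x - s))

/-- The triangle `Ω = {(x,s) : 0 ≤ s ≤ x ≤ A}` (first coordinate `x`, second `s`). -/
def Tri (A : ℝ) : Set (ℝ × ℝ) := {q | 0 ≤ q.2 ∧ q.2 ≤ q.1 ∧ q.1 ≤ A}

/-- Basic reproductive number `R₀ = ∬_Ω k(x,s) d(s,x)`. -/
noncomputable def R0 (γ N A : ℝ) (p θ : ℝ → ℝ) : ℝ :=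
  ∫ q in Tri A, kker γ N p θ q.1 q.2

/-- `F(Q) = 1 - ∬_Ω k(x,s) e^{-Q Λ(x,s)} d(s,x)`. -/
noncomputable def FF (γ N A : ℝ) (p θ : ℝ → ℝ) (Q : ℝ) : ℝ :=
  1 - ∫ q in Tri A, kker γ N p θ q.1 q.2 * Real.exp (-Q * Lam θ q.1 q.2)

/-- Iteration map `T(Q) = Q·(1 - F(Q))`. -/
noncomputable def TT (γ N A : ℝ) (p θ : ℝ → ℝ) (Q : ℝ) : ℝ :=
  Q * (1 - FF γ N A p θ Q)

lemma tri_closed (A : ℝ) : IsClosed (Tri A) := by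
  have : Tri A = {q : ℝ × ℝ | 0 ≤ q.2} ∩ ({q | q.2 ≤ q.1} ∩ {q | q.1 ≤ A}) := rfl
  rw [this]
  exact (isClosed_le continuous_const continuous_snd).inter
    ((isClosed_le continuous_snd continuous_fst).inter
      (isClosed_le continuous_fst continuous_const))

lemma tri_compact (A : ℝ) : IsCompact (Tri A) := by
  have hsub : Tri A ⊆ Icc 0 A ×ˢ Icc 0 A := by
    rintro ⟨x, s⟩ ⟨h1, h2, h3⟩
    exact ⟨⟨le_trans h1 h2, h3⟩, ⟨h1, le_trans h2 h3⟩⟩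
  exact ((isCompact_Icc.prod isCompact_Icc).of_isClosed_subset (tri_closed A) hsub)

lemma tri_integral (A : ℝ) (hA : 0 ≤ A) (f : ℝ × ℝ → ℝ) (hf : Continuous f) :
    (∫ q in Tri A, f q = ∫ x in (0:ℝ)..A, ∫ s in (0:ℝ)..x, f (x, s)) ∧
      IntervalIntegrable (fun x => ∫ s in (0:ℝ)..x, f (x, s)) volume 0 A := by
  have hmeas : MeasurableSet (Tri A) := (tri_closed A).measurableSet
  have hint : IntegrableOn f (Tri A) := hf.continuousOn.integrableOn_compact (tri_compact A)
  have hind : Integrable ((Tri A).indicator f) := by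
    rwa [integrable_indicator_iff hmeas]
  have key : (fun x => ∫ s, (Tri A).indicator f (x, s)) =
      (Icc (0:ℝ) A).indicator (fun x => ∫ s in (0:ℝ)..x, f (x, s)) := by
    funext x
    by_cases hx : x ∈ Icc (0:ℝ) A
    · rw [indicator_of_mem hx]
      have : (fun s => (Tri A).indicator f (x, s)) =
          (Icc (0:ℝ) x).indicator (fun s => f (x, s)) := by
        funext s
        by_cases hs : s ∈ Icc (0:ℝ) x
        · rw [indicator_of_mem hs, indicator_of_mem]
          exact ⟨hs.1, hs.2, hx.2⟩
        · rw [indicator_of_notMem hs, indicator_of_notMem]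
          intro ⟨a, b, _⟩; exact hs ⟨a, b⟩
      rw [this, integral_indicator measurableSet_Icc,
        intervalIntegral.integral_of_le hx.1, ← integral_Icc_eq_integral_Ioc]
    · rw [indicator_of_notMem hx]
      have : (fun s => (Tri A).indicator f (x, s)) = fun _ => (0:ℝ) := by
        funext s
        rw [indicator_of_notMem]
        intro ⟨a, b, c⟩
        exact hx ⟨le_trans a b, c⟩
      rw [this, integral_zero]
  constructor
  · rw [← integral_indicator hmeas]
    rw [Measure.volume_eq_prod] at hind ⊢
    rw [MeasureTheory.integral_prod _ hind]
    rw [key, integral_indicator measurableSet_Icc,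
      intervalIntegral.integral_of_le hA, ← integral_Icc_eq_integral_Ioc]
  · have h2 : Integrable (fun x => ∫ s, (Tri A).indicator f (x, s)) volume := by
      rw [Measure.volume_eq_prod] at hind
      exact hind.integral_prod_left
    rw [key] at h2
    have : IntegrableOn (fun x => ∫ s in (0:ℝ)..x, f (x, s)) (Icc 0 A) volume :=
      (integrable_indicator_iff measurableSet_Icc).mp h2
    exact (by rwa [uIcc_of_le hA] : IntegrableOn _ (uIcc 0 A) volume).intervalIntegrable


/-- `F(1) > γ/(γ + θ_max) > 0`. -/
theorem F_one (γ A N : ℝ) (hγ : 0 < γ) (hA : 0 < A) (hN : 0 < N)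
    (θ p : ℝ → ℝ)
    (hθc : ContinuousOn θ (Set.Icc 0 A)) (hθpos : ∀ x ∈ Set.Icc 0 A, 0 < θ x)
    (hpc : ContinuousOn p (Set.Icc 0 A)) (hppos : ∀ x ∈ Set.Icc 0 A, 0 < p x)
    (hnorm : (1/N) * ∫ x in (0:ℝ)..A, p x = 1)
    (θmax : ℝ) (hθmax : IsGreatest (θ '' Set.Icc 0 A) θmax) :
    γ / (γ + θmax) < FF γ N A p θ 1 ∧ 0 < γ / (γ + θmax) := by
  have h0A : (0:ℝ) ∈ Icc 0 A := ⟨le_refl 0, hA.le⟩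
  have hθmaxpos : 0 < θmax := lt_of_lt_of_le (hθpos 0 h0A) (hθmax.2 ⟨0, h0A, rfl⟩)
  have hγθ : 0 < γ + θmax := by linarith
  refine ⟨?_, div_pos hγ hγθ⟩
  -- clamping to [0, A]
  set cl : ℝ → ℝ := fun t => max 0 (min t A) with hcl
  have hclmem : ∀ t, cl t ∈ Icc 0 A := fun t => ⟨le_max_left _ _, max_le hA.le (min_le_right t A)⟩
  have hclid : ∀ t ∈ Icc (0:ℝ) A, cl t = t := by
    intro t ht
    simp only [hcl, min_eq_left ht.2, max_eq_right ht.1]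
  have hclc : Continuous cl := Continuous.max continuous_const (continuous_id.min continuous_const)
  set θ' : ℝ → ℝ := fun t => θ (cl t) with hθ'
  set p' : ℝ → ℝ := fun t => p (cl t) with hp'
  have hθ'c : Continuous θ' := hθc.comp_continuous hclc hclmem
  have hp'c : Continuous p' := hpc.comp_continuous hclc hclmem
  have hθ'pos : ∀ t, 0 < θ' t := fun t => hθpos _ (hclmem t)
  have hθ'le : ∀ t, θ' t ≤ θmax := fun t => hθmax.2 ⟨cl t, hclmem t, rfl⟩
  have hθ'eq : ∀ t ∈ Icc (0:ℝ) A, θ' t = θ t := fun t ht => by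
    show θ (cl t) = θ t; rw [hclid t ht]
  have hp'eq : ∀ t ∈ Icc (0:ℝ) A, p' t = p t := fun t ht => by
    show p (cl t) = p t; rw [hclid t ht]
  set L : ℝ → ℝ := fun u => ∫ t in (0:ℝ)..u, θ' t with hLdef
  have hLc : Continuous L :=
    intervalIntegral.continuous_primitive (fun a b => hθ'c.intervalIntegrable a b) 0
  have hLderiv : ∀ s : ℝ, HasDerivAt L (θ' s) s := fun s =>
    intervalIntegral.integral_hasDerivAt_right (hθ'c.intervalIntegrable 0 s)
      (hθ'c.stronglyMeasurable.stronglyMeasurableAtFilter) hθ'c.continuousAt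
  have hLsub : ∀ s x : ℝ, L x - L s = ∫ t in s..x, θ' t := by
    intro s x
    have h := intervalIntegral.integral_add_adjacent_intervals (μ := volume)
      (hθ'c.intervalIntegrable 0 s) (hθ'c.intervalIntegrable s x)
    simp only [hLdef]
    linarith
  have hL0 : L 0 = 0 := by simp [hLdef]
  have hLmono : ∀ x, x ≤ A → L x ≤ L A := by
    intro x hx
    have h1 := hLsub x A
    have h2 : 0 ≤ ∫ t in x..A, θ' t :=
      intervalIntegral.integral_nonneg hx (fun t _ => (hθ'pos t).le)
    linarith
  have hLbound : ∀ s x : ℝ, s ≤ x → L x - L s ≤ θmax * (x - s) := by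
    intro s x hsx
    rw [hLsub]
    calc ∫ t in s..x, θ' t ≤ ∫ _ in s..x, θmax :=
          intervalIntegral.integral_mono_on hsx (hθ'c.intervalIntegrable s x)
            intervalIntegrable_const (fun t _ => hθ'le t)
      _ = θmax * (x - s) := by rw [intervalIntegral.integral_const, smul_eq_mul]; ring
  have hLnonneg : ∀ s x : ℝ, s ≤ x → 0 ≤ L x - L s := by
    intro s x hsx
    rw [hLsub]
    exact intervalIntegral.integral_nonneg hsx (fun t _ => (hθ'pos t).le)
  set c : ℝ := (γ + θmax) / θmax with hc
  have hc1 : 1 < c := by rw [hc, lt_div_iff₀ hθmaxpos]; linarith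
  have hcpos : 0 < c := by linarith
  set f : ℝ × ℝ → ℝ :=
    fun q => (p' q.1 / N) * θ' q.2 * Real.exp (-γ * (q.1 - q.2) + -(L q.1 - L q.2)) with hfdef
  have hfc : Continuous f := by
    apply Continuous.mul
    · exact ((hp'c.comp continuous_fst).div_const N).mul (hθ'c.comp continuous_snd)
    · exact Real.continuous_exp.comp
        (((continuous_const.mul (continuous_fst.sub continuous_snd))).add
          (((hLc.comp continuous_fst).sub (hLc.comp continuous_snd)).neg))
  have hmeas : MeasurableSet (Tri A) := (tri_closed A).measurableSet
  have hEq : EqOn (fun q : ℝ × ℝ => kker γ N p θ q.1 q.2 * Real.exp (-1 * Lam θ q.1 q.2))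
      f (Tri A) := by
    rintro ⟨x, s⟩ ⟨h1, h2, h3⟩
    have hsI : s ∈ Icc (0:ℝ) A := ⟨h1, h2.trans h3⟩
    have hxI : x ∈ Icc (0:ℝ) A := ⟨h1.trans h2, h3⟩
    have hLam : Lam θ x s = L x - L s := by
      rw [hLsub]
      apply intervalIntegral.integral_congr
      intro t ht
      rw [uIcc_of_le h2] at ht
      exact (hθ'eq t ⟨h1.trans ht.1, ht.2.trans h3⟩).symm
    simp only [kker, hfdef]
    rw [hLam, hp'eq x hxI, hθ'eq s hsI, Real.exp_add]
    ring_nf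
  obtain ⟨hIval, hJint⟩ := tri_integral A hA.le f hfc
  have hIcong : (∫ q in Tri A, kker γ N p θ q.1 q.2 * Real.exp (-1 * Lam θ q.1 q.2))
      = ∫ q in Tri A, f q := MeasureTheory.setIntegral_congr_fun hmeas hEq
  set δ : ℝ := Real.exp (-c * L A) with hδ
  have hδpos : 0 < δ := Real.exp_pos _
  set K : ℝ := (1/c) * (1 - δ) with hK
  -- inner bound
  have hinner : ∀ x ∈ Icc (0:ℝ) A, (∫ s in (0:ℝ)..x, f (x, s)) ≤ (p' x / N) * K := by
    intro x hx
    have hpN : 0 ≤ p' x / N := le_of_lt (div_pos (hppos _ (hclmem x)) hN)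
    have step1 : (∫ s in (0:ℝ)..x, f (x, s)) ≤
        ∫ s in (0:ℝ)..x, (p' x / N) * (θ' s * Real.exp (-c * (L x - L s))) := by
      apply intervalIntegral.integral_mono_on hx.1
      · exact (hfc.comp (continuous_const.prodMk continuous_id)).intervalIntegrable 0 x
      · exact (continuous_const.mul (hθ'c.mul (Real.continuous_exp.comp
          (continuous_const.mul (continuous_const.sub hLc))))).intervalIntegrable 0 x
      · intro s hs
        simp only [hfdef]
        have hD : 0 ≤ L x - L s := hLnonneg s x hs.2
        have hb : L x - L s ≤ θmax * (x - s) := hLbound s x hs.2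
        have harg : -γ * (x - s) + -(L x - L s) ≤ -c * (L x - L s) := by
          have hcm : c - 1 = γ / θmax := by rw [hc]; field_simp; ring
          have h5 : (c - 1) * (L x - L s) ≤ γ * (x - s) := by
            rw [hcm, div_mul_eq_mul_div, div_le_iff₀ hθmaxpos]
            nlinarith
          nlinarith
        have hE := Real.exp_le_exp.mpr harg
        have h6 := mul_le_mul_of_nonneg_left hE (mul_nonneg hpN (hθ'pos s).le)
        nlinarith [h6]
    have step2 : (∫ s in (0:ℝ)..x, (p' x / N) * (θ' s * Real.exp (-c * (L x - L s))))
        = (p' x / N) * ((1/c) * (1 - Real.exp (-c * L x))) := by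
      rw [intervalIntegral.integral_const_mul]
      congr 1
      have hrw : ∀ s : ℝ, θ' s * Real.exp (-c * (L x - L s))
          = (θ' s * Real.exp (c * L s)) * Real.exp (-c * L x) := by
        intro s
        rw [mul_assoc, ← Real.exp_add]
        ring_nf
      simp only [hrw]
      rw [intervalIntegral.integral_mul_const]
      have hFTC : (∫ s in (0:ℝ)..x, θ' s * Real.exp (c * L s))
          = (1/c) * Real.exp (c * L x) - (1/c) * Real.exp (c * L 0) := by
        apply intervalIntegral.integral_eq_sub_of_hasDerivAt
        · intro s _
          have h1 := (((hLderiv s).const_mul c).exp).const_mul (1/c)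
          convert h1 using 1
          · rfl
          · field_simp [hcpos.ne']
        · exact (hθ'c.mul (Real.continuous_exp.comp (continuous_const.mul hLc))).intervalIntegrable 0 x
      rw [hFTC, hL0, mul_zero, Real.exp_zero]
      have hEE : Real.exp (c * L x) * Real.exp (-c * L x) = 1 := by
        rw [← Real.exp_add]
        ring_nf
        exact Real.exp_zero
      linear_combination (1/c) * hEE
    have step3 : (1/c) * (1 - Real.exp (-c * L x)) ≤ K := by
      rw [hK, hδ]
      have h1 : L x ≤ L A := hLmono x hx.2
      have h2 : Real.exp (-c * L A) ≤ Real.exp (-c * L x) := Real.exp_le_exp.mpr (by nlinarith)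
      have h3 : (0:ℝ) ≤ 1/c := by positivity
      nlinarith
    calc (∫ s in (0:ℝ)..x, f (x, s)) ≤ _ := step1
      _ = (p' x / N) * ((1/c) * (1 - Real.exp (-c * L x))) := step2
      _ ≤ (p' x / N) * K := mul_le_mul_of_nonneg_left step3 hpN
  -- outer bound
  have houter : (∫ x in (0:ℝ)..A, ∫ s in (0:ℝ)..x, f (x, s)) ≤ ∫ x in (0:ℝ)..A, (p' x / N) * K :=
    intervalIntegral.integral_mono_on hA.le hJint
      (((hp'c.div_const N).mul continuous_const).intervalIntegrable 0 A) hinner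
  have hpint : (∫ x in (0:ℝ)..A, p' x) = N := by
    have h1 : (∫ x in (0:ℝ)..A, p' x) = ∫ x in (0:ℝ)..A, p x := by
      apply intervalIntegral.integral_congr
      intro t ht
      rw [uIcc_of_le hA.le] at ht
      exact hp'eq t ht
    rw [h1]
    field_simp at hnorm
    linarith
  have hKval : (∫ x in (0:ℝ)..A, (p' x / N) * K) = K := by
    have h1 : ∀ x : ℝ, (p' x / N) * K = p' x * (K / N) := fun x => by ring
    simp only [h1]
    rw [intervalIntegral.integral_mul_const, hpint]
    field_simp
  have hfrac : θmax / (γ + θmax) = 1/c := by rw [hc, one_div_div]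
  have hKlt : K < θmax / (γ + θmax) := by
    rw [hfrac, hK]
    have h3 : (0:ℝ) < 1/c := by positivity
    nlinarith
  have harith : γ / (γ + θmax) = 1 - θmax / (γ + θmax) := by field_simp; ring
  have hIlt : (∫ q in Tri A, kker γ N p θ q.1 q.2 * Real.exp (-1 * Lam θ q.1 q.2))
      < θmax / (γ + θmax) := by
    rw [hIcong, hIval]
    calc (∫ x in (0:ℝ)..A, ∫ s in (0:ℝ)..x, f (x, s)) ≤ _ := houter
      _ = K := hKval
      _ < θmax / (γ + θmax) := hKlt
  simp only [FF]
  linarith
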